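/- Let α > 1. Let Φ : Matrix (Fin d_in) (Fin d_in) ℂ →ₗ[ℂ] Matrix (Fin d_out) (Fin d_out) ℂ be a linear map that is positive (maps positive semidefinite matrices to positive semidefinite matrices) and trace-preserving. Let G be a finite group with unitary representations u : G →* unitaryGroup (Fin d_in) ℂ and v : G →* unitaryGroup (Fin d_out) ℂ such that Φ((u g) ρ (u g)⁻¹) = (v g) Φ(ρ) (v g)⁻¹ for all g ∈ G and all ρ, and such that every matrix commuting with v g for all g ∈ G is a scalar multiple of the identity. Then for every density matrix σ on ℂ^{d_in} with Φ(σ) positive definite: ⨆_{ρ} D_α(Φ(ρ)‖Φ(σ)) ≥ log₂ d_out − S^min_α(Φ), where the supremum is over all density matrices ρ on ℂ^{d_in} and S^min_α(Φ) := ⨅_{ρ} (1/(1−α)) · log₂ tr(Φ(ρ)^α) is the minimum output α-Rényi entropy of Φ. Moreover equality holds for σ = (1/d_in) • 1. -/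

import Mathlib

open Matrix ComplexOrder

/-- Matrix power via functional calculus on eigenvalues, with the convention `0 ^ β = 0`
(matrices that are not Hermitian are sent to `0`). -/
noncomputable def mpow {d : ℕ} (A : Matrix (Fin d) (Fin d) ℂ) (β : ℝ) :
    Matrix (Fin d) (Fin d) ℂ :=
  if hA : A.IsHermitian then
    (hA.eigenvectorUnitary : Matrix (Fin d) (Fin d) ℂ) *
      Matrix.diagonal (fun i =>
        ((if hA.eigenvalues i = 0 then (0 : ℝ) else hA.eigenvalues i ^ β : ℝ) : ℂ)) *
      star (hA.eigenvectorUnitary : Matrix (Fin d) (Fin d) ℂ)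
  else 0

/-- The relative Rényi `α`-entropy `D_α(ρ‖σ) = (1/(α−1)) log₂ tr(ρ^α σ^{1−α})`. -/
noncomputable def Dalpha {d : ℕ} (α : ℝ) (ρ σ : Matrix (Fin d) (Fin d) ℂ) : ℝ :=
  (1 / (α - 1)) * Real.logb 2 ((mpow ρ α * mpow σ (1 - α)).trace).re


noncomputable def gp (β : ℝ) : ℝ → ℝ := fun x => if x = 0 then 0 else x ^ β

lemma mpow_eq_cfc {d : ℕ} {A : Matrix (Fin d) (Fin d) ℂ} (hA : A.IsHermitian) (β : ℝ) :
    mpow A β = cfc (gp β) A := by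
  rw [hA.cfc_eq, mpow, dif_pos hA]
  rfl

noncomputable def conjSAH {d : ℕ} (W : Matrix.unitaryGroup (Fin d) ℂ) :
    Matrix (Fin d) (Fin d) ℂ →⋆ₐ[ℂ] Matrix (Fin d) (Fin d) ℂ where
  toFun X := W * X * star (W : Matrix (Fin d) (Fin d) ℂ)
  map_one' := by
    show (W : Matrix (Fin d) (Fin d) ℂ) * 1 * star (W : Matrix (Fin d) (Fin d) ℂ) = 1
    rw [mul_one]
    exact Matrix.mem_unitaryGroup_iff.mp W.2
  map_mul' X Y := by
    show (W : Matrix (Fin d) (Fin d) ℂ) * (X * Y) * star (W : Matrix (Fin d) (Fin d) ℂ) = ((W : Matrix (Fin d) (Fin d) ℂ) * X * star (W : Matrix (Fin d) (Fin d) ℂ)) * ((W : Matrix (Fin d) (Fin d) ℂ) * Y * star (W : Matrix (Fin d) (Fin d) ℂ))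
    have h : star (W : Matrix (Fin d) (Fin d) ℂ) * W = 1 := Matrix.mem_unitaryGroup_iff'.mp W.2
    calc (W : Matrix (Fin d) (Fin d) ℂ) * (X * Y) * star (W : Matrix (Fin d) (Fin d) ℂ)
        = ((W : Matrix (Fin d) (Fin d) ℂ) * X) * (star (W : Matrix (Fin d) (Fin d) ℂ) *
            (W : Matrix (Fin d) (Fin d) ℂ)) * (Y * star (W : Matrix (Fin d) (Fin d) ℂ)) := by
          rw [h, mul_one]; simp only [mul_assoc]
      _ = _ := by simp only [mul_assoc]
  map_zero' := by simp
  map_add' X Y := by noncomm_ring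
  commutes' c := by
    show (W : Matrix (Fin d) (Fin d) ℂ) * (algebraMap ℂ (Matrix (Fin d) (Fin d) ℂ) c) * star (W : Matrix (Fin d) (Fin d) ℂ) = algebraMap ℂ (Matrix (Fin d) (Fin d) ℂ) c
    simp only [Algebra.algebraMap_eq_smul_one]
    rw [mul_smul_comm, mul_one, smul_mul_assoc, Matrix.mem_unitaryGroup_iff.mp W.2]
  map_star' X := by
    show (W : Matrix (Fin d) (Fin d) ℂ) * star X * star (W : Matrix (Fin d) (Fin d) ℂ) = star ((W : Matrix (Fin d) (Fin d) ℂ) * X * star (W : Matrix (Fin d) (Fin d) ℂ))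
    simp only [StarMul.star_mul, star_star]
    rw [mul_assoc]

lemma conjSAH_apply {d : ℕ} (W : Matrix.unitaryGroup (Fin d) ℂ) (X : Matrix (Fin d) (Fin d) ℂ) :
    conjSAH W X = W * X * star (W : Matrix (Fin d) (Fin d) ℂ) := rfl

lemma continuous_conjSAH {d : ℕ} (W : Matrix.unitaryGroup (Fin d) ℂ) :
    Continuous (conjSAH W) := by
  show Continuous fun X : Matrix (Fin d) (Fin d) ℂ => (W : Matrix (Fin d) (Fin d) ℂ) * X * _
  exact (continuous_const.matrix_mul continuous_id).matrix_mul continuous_const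

lemma isHermitian_conj {d : ℕ} {A : Matrix (Fin d) (Fin d) ℂ} (hA : A.IsHermitian)
    (W : Matrix.unitaryGroup (Fin d) ℂ) :
    ((W : Matrix (Fin d) (Fin d) ℂ) * A * star (W : Matrix (Fin d) (Fin d) ℂ)).IsHermitian := by
  have := Matrix.isHermitian_mul_mul_conjTranspose (W : Matrix (Fin d) (Fin d) ℂ) (A := A) hA
  rwa [Matrix.star_eq_conjTranspose]

lemma mpow_conj {d : ℕ} {A : Matrix (Fin d) (Fin d) ℂ} (hA : A.IsHermitian)
    (W : Matrix.unitaryGroup (Fin d) ℂ) (β : ℝ) :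
    mpow ((W : Matrix (Fin d) (Fin d) ℂ) * A * star (W : Matrix (Fin d) (Fin d) ℂ)) β
      = W * mpow A β * star (W : Matrix (Fin d) (Fin d) ℂ) := by
  have hB : ((W : Matrix (Fin d) (Fin d) ℂ) * A * star (W : Matrix (Fin d) (Fin d) ℂ)).IsHermitian :=
    isHermitian_conj hA W
  have hcont : ContinuousOn (gp β) (spectrum ℝ A) := by
    rw [continuousOn_iff_continuous_restrict]
    exact continuous_of_discreteTopology
  rw [mpow_eq_cfc hB β, mpow_eq_cfc hA β, ← conjSAH_apply, ← conjSAH_apply]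
  exact (StarAlgHom.map_cfc (conjSAH W) (gp β) A hcont (continuous_conjSAH W) hA (by exact hB)).symm

section S2
variable {d : ℕ}

lemma trace_mul_diagonal (M : Matrix (Fin d) (Fin d) ℂ) (f : Fin d → ℂ) :
    (M * Matrix.diagonal f).trace = ∑ i, M i i * f i := by
  simp [Matrix.trace, Matrix.diag, Matrix.mul_apply, Matrix.diagonal_apply, Finset.sum_ite_eq,
    mul_comm]

-- trace of (U * D * star U) * B
lemma trace_unitary_diag_conj_mul (U : Matrix.unitaryGroup (Fin d) ℂ) (f : Fin d → ℂ)
    (B : Matrix (Fin d) (Fin d) ℂ) :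
    (((U : Matrix (Fin d) (Fin d) ℂ) * Matrix.diagonal f *
        star (U : Matrix (Fin d) (Fin d) ℂ)) * B).trace
      = ∑ i, f i * ((star (U : Matrix (Fin d) (Fin d) ℂ) * B * U) i i) := by
  have h1 : ((U : Matrix (Fin d) (Fin d) ℂ) * Matrix.diagonal f *
        star (U : Matrix (Fin d) (Fin d) ℂ)) * B
      = (U : Matrix (Fin d) (Fin d) ℂ) * Matrix.diagonal f *
          (star (U : Matrix (Fin d) (Fin d) ℂ) * B) := by
    simp only [mul_assoc]
  rw [h1, Matrix.trace_mul_comm, ← Matrix.mul_assoc, trace_mul_diagonal]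
  congr 1
  ext i
  rw [mul_comm]

lemma psd_diag_nonneg {B : Matrix (Fin d) (Fin d) ℂ} (hB : B.PosSemidef) (i : Fin d) :
    0 ≤ (B i i).re ∧ (B i i).im = 0 := by
  have := hB.dotProduct_mulVec_nonneg (Pi.single i 1)
  rw [Complex.nonneg_iff] at this
  have hval : dotProduct (star (Pi.single i 1)) (B *ᵥ (Pi.single i 1)) = B i i := by
    simp [dotProduct, Matrix.mulVec, Pi.single_apply, Finset.sum_ite_eq,
      dotProduct]
  rw [hval] at this
  exact ⟨this.1, this.2.symm⟩

lemma pd_diag_pos {B : Matrix (Fin d) (Fin d) ℂ} (hB : B.PosDef) (i : Fin d) :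
    0 < (B i i).re ∧ (B i i).im = 0 := by
  have := hB.dotProduct_mulVec_pos (x := Pi.single i 1) (fun h => by simpa using congr_fun h i)
  rw [Complex.pos_iff] at this
  have hval : dotProduct (star (Pi.single i 1)) (B *ᵥ (Pi.single i 1)) = B i i := by
    simp [dotProduct, Matrix.mulVec, Pi.single_apply, Finset.sum_ite_eq,
      dotProduct]
  rw [hval] at this
  exact ⟨this.1, this.2.symm⟩

end S2


section Real
variable {d : ℕ} {α : ℝ}

lemma gp_nonneg {β x : ℝ} (hx : 0 ≤ x) : 0 ≤ gp β x := by
  unfold gp; split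
  · exact le_refl 0
  · exact Real.rpow_nonneg hx β

lemma gp_eq_rpow {β x : ℝ} (hβ : β ≠ 0) (hx : 0 ≤ x) : gp β x = x ^ β := by
  unfold gp; split
  · rename_i h; rw [h, Real.zero_rpow hβ]
  · rfl

/-- `∑ λᵢ^α ≤ 1` for a probability vector and `α ≥ 1`. -/
lemma sum_gp_le_one (hα : 1 < α) (lam : Fin d → ℝ) (h0 : ∀ i, 0 ≤ lam i)
    (h1 : ∑ i, lam i = 1) : ∑ i, gp α (lam i) ≤ 1 := by
  calc ∑ i, gp α (lam i) ≤ ∑ i, lam i := by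
        apply Finset.sum_le_sum
        intro i _
        rcases eq_or_lt_of_le (h0 i) with h | h
        · simp [gp, ← h]
        · rw [gp_eq_rpow (by positivity) (h0 i)]
          have hle1 : lam i ≤ 1 := by
            rw [← h1]
            exact Finset.single_le_sum (fun j _ => h0 j) (Finset.mem_univ i)
          calc lam i ^ α ≤ lam i ^ (1:ℝ) :=
                Real.rpow_le_rpow_of_exponent_ge h hle1 hα.le
            _ = lam i := Real.rpow_one _
    _ = 1 := h1

/-- `∑ λᵢ^α ≥ d^(1−α)` for a probability vector and `α ≥ 1`. -/
lemma sum_gp_ge (hd : 0 < d) (hα : 1 < α) (lam : Fin d → ℝ) (h0 : ∀ i, 0 ≤ lam i)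
    (h1 : ∑ i, lam i = 1) : (d:ℝ) ^ (1 - α) ≤ ∑ i, gp α (lam i) := by
  have hdpos : (0:ℝ) < d := by exact_mod_cast hd
  have key := Real.rpow_arith_mean_le_arith_mean_rpow Finset.univ
      (fun _ : Fin d => (d:ℝ)⁻¹) lam (fun i _ => by positivity)
      (by simp [Finset.sum_const]; field_simp) (fun i _ => h0 i) hα.le
  have hl : (∑ i, (d:ℝ)⁻¹ * lam i) = (d:ℝ)⁻¹ := by
    rw [← Finset.mul_sum, h1, mul_one]
  rw [hl] at key
  have hgp : ∑ i, (d:ℝ)⁻¹ * lam i ^ α = (d:ℝ)⁻¹ * ∑ i, gp α (lam i) := by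
    rw [Finset.mul_sum]
    congr 1; ext i
    rw [gp_eq_rpow (by positivity) (h0 i)]
  rw [hgp] at key
  have h2 : ((d:ℝ)⁻¹) ^ α = (d:ℝ)⁻¹ * (d:ℝ) ^ (1-α) := by
    rw [Real.inv_rpow hdpos.le, ← Real.rpow_neg hdpos.le, ← Real.rpow_neg_one (d:ℝ),
      ← Real.rpow_add hdpos]
    ring_nf
  rw [h2] at key
  exact le_of_mul_le_mul_left key (by positivity)

/-- Hölder: `∑ μᵢ^(1−α) ≥ d^α` for a positive probability vector, `α > 1`. -/
lemma sum_gp_one_sub_ge (hd : 0 < d) (hα : 1 < α) (mu : Fin d → ℝ) (h0 : ∀ i, 0 < mu i)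
    (h1 : ∑ i, mu i = 1) : (d:ℝ) ^ α ≤ ∑ i, gp (1-α) (mu i) := by
  have hα1 : 0 < α - 1 := by linarith
  have hpq : Real.HolderConjugate (α/(α-1)) α := by
    rw [Real.holderConjugate_iff]
    constructor
    · rw [lt_div_iff₀ hα1]; linarith
    · field_simp; ring
  have key := Real.inner_le_Lp_mul_Lq_of_nonneg Finset.univ hpq
      (f := fun i => mu i ^ ((α-1)/α)) (g := fun i => mu i ^ ((1-α)/α))
      (fun i _ => Real.rpow_nonneg (h0 i).le _) (fun i _ => Real.rpow_nonneg (h0 i).le _)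
  have e1 : ∀ i : Fin d, mu i ^ ((α-1)/α) * mu i ^ ((1-α)/α) = 1 := by
    intro i
    rw [← Real.rpow_add (h0 i), show (α-1)/α + (1-α)/α = 0 by ring, Real.rpow_zero]
  have e2 : ∀ i : Fin d, (mu i ^ ((α-1)/α)) ^ (α/(α-1)) = mu i := by
    intro i
    have hα0 : α ≠ 0 := by linarith
    have hα1' : α - 1 ≠ 0 := ne_of_gt hα1
    rw [← Real.rpow_mul (h0 i).le, show (α-1)/α * (α/(α-1)) = 1 by field_simp,
      Real.rpow_one]
  have e3 : ∀ i : Fin d, (mu i ^ ((1-α)/α)) ^ α = mu i ^ (1-α) := by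
    intro i
    rw [← Real.rpow_mul (h0 i).le]
    congr 1
    field_simp
  simp only [e1, e2, e3] at key
  rw [h1] at key
  simp only [Finset.sum_const, Finset.card_univ, Fintype.card_fin, nsmul_eq_mul, mul_one] at key
  have hXnn : 0 ≤ ∑ i, mu i ^ (1-α) := Finset.sum_nonneg fun i _ => Real.rpow_nonneg (h0 i).le _
  rw [Real.one_rpow, one_mul] at key
  have key2 : (d:ℝ) ≤ (∑ i, mu i ^ (1-α)) ^ (1/α) := key
  have := Real.rpow_le_rpow (by positivity) key2 (le_of_lt (by linarith : (0:ℝ) < α))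
  rw [← Real.rpow_mul hXnn] at this
  rw [one_div, inv_mul_cancel₀ (by linarith : α ≠ 0), Real.rpow_one] at this
  calc (d:ℝ) ^ α ≤ ∑ i, mu i ^ (1-α) := this
    _ = ∑ i, gp (1-α) (mu i) := by
        apply Finset.sum_congr rfl
        intro i _
        rw [gp_eq_rpow (by linarith) (h0 i).le]
end Real

section S4
variable {d : ℕ} {A : Matrix (Fin d) (Fin d) ℂ}

lemma gp_ne_zero_eq {β x : ℝ} (hx : x ≠ 0) : gp β x = x ^ β := if_neg hx

lemma trace_mpow_mul (hA : A.IsHermitian) (β : ℝ) (B : Matrix (Fin d) (Fin d) ℂ) :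
    (mpow A β * B).trace
      = ∑ i, ((gp β (hA.eigenvalues i) : ℝ) : ℂ) *
          ((star (hA.eigenvectorUnitary : Matrix (Fin d) (Fin d) ℂ) * B *
            (hA.eigenvectorUnitary : Matrix (Fin d) (Fin d) ℂ)) i i) := by
  rw [mpow, dif_pos hA]
  exact trace_unitary_diag_conj_mul hA.eigenvectorUnitary _ B

lemma trace_mpow (hA : A.IsHermitian) (β : ℝ) :
    (mpow A β).trace = ∑ i, ((gp β (hA.eigenvalues i) : ℝ) : ℂ) := by
  have h := trace_mpow_mul hA β 1
  rw [mul_one] at h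
  rw [h]
  have h1 : star (hA.eigenvectorUnitary : Matrix (Fin d) (Fin d) ℂ) * 1 *
      (hA.eigenvectorUnitary : Matrix (Fin d) (Fin d) ℂ) = 1 := by
    rw [mul_one]
    exact Matrix.mem_unitaryGroup_iff'.mp hA.eigenvectorUnitary.2
  rw [h1]
  simp [Matrix.one_apply]

lemma trace_eq_sum_eigenvalues (hA : A.IsHermitian) :
    A.trace = ∑ i, ((hA.eigenvalues i : ℝ) : ℂ) := by
  conv_lhs => rw [hA.spectral_theorem, Unitary.conjStarAlgAut_apply]
  rw [Matrix.trace_mul_cycle,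
    show star (hA.eigenvectorUnitary : Matrix (Fin d) (Fin d) ℂ) *
        (hA.eigenvectorUnitary : Matrix (Fin d) (Fin d) ℂ) = 1 from
      Matrix.mem_unitaryGroup_iff'.mp hA.eigenvectorUnitary.2, one_mul, Matrix.trace_diagonal]
  rfl

lemma re_trace_mpow_mul (hA : A.IsHermitian) (β : ℝ) (B : Matrix (Fin d) (Fin d) ℂ) :
    ((mpow A β * B).trace).re
      = ∑ i, gp β (hA.eigenvalues i) *
          ((star (hA.eigenvectorUnitary : Matrix (Fin d) (Fin d) ℂ) * B *
            (hA.eigenvectorUnitary : Matrix (Fin d) (Fin d) ℂ)) i i).re := by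
  rw [trace_mpow_mul hA β B, Complex.re_sum]
  congr 1; ext i
  simp [Complex.mul_re]

lemma re_trace_mpow (hA : A.IsHermitian) (β : ℝ) :
    ((mpow A β).trace).re = ∑ i, gp β (hA.eigenvalues i) := by
  rw [trace_mpow hA β, Complex.re_sum]
  simp

lemma ofReal_smul_one_eq_algebraMap (r : ℝ) :
    ((r : ℂ) • (1 : Matrix (Fin d) (Fin d) ℂ)) = algebraMap ℝ (Matrix (Fin d) (Fin d) ℂ) r := by
  ext i j
  simp [Matrix.algebraMap_matrix_apply, Matrix.one_apply, mul_ite]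

lemma mpow_ofReal_smul_one {r : ℝ} (hr : r ≠ 0) (β : ℝ) :
    mpow ((r : ℂ) • (1 : Matrix (Fin d) (Fin d) ℂ)) β
      = ((r ^ β : ℝ) : ℂ) • (1 : Matrix (Fin d) (Fin d) ℂ) := by
  have hherm : ((r : ℂ) • (1 : Matrix (Fin d) (Fin d) ℂ)).IsHermitian := by
    simp [Matrix.IsHermitian, Matrix.conjTranspose_smul, Matrix.conjTranspose_one,
      Complex.star_def, Complex.conj_ofReal]
  rw [mpow_eq_cfc hherm β, ofReal_smul_one_eq_algebraMap r, cfc_algebraMap r (gp β),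
    gp_ne_zero_eq hr, ofReal_smul_one_eq_algebraMap]

lemma sum_eigenvalues_eq_one (hA : A.PosSemidef) (htr : A.trace = 1) :
    ∑ i, hA.1.eigenvalues i = 1 := by
  have h := trace_eq_sum_eigenvalues hA.1
  rw [htr] at h
  exact_mod_cast h.symm

lemma mpow_posSemidef (hA : A.PosSemidef) (β : ℝ) : (mpow A β).PosSemidef := by
  rw [mpow, dif_pos hA.1]
  have hdiag : (Matrix.diagonal (fun i =>
      ((if hA.1.eigenvalues i = 0 then (0:ℝ) else hA.1.eigenvalues i ^ β : ℝ) : ℂ))).PosSemidef := by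
    rw [Matrix.posSemidef_diagonal_iff]
    intro i
    rw [Complex.nonneg_iff]
    constructor
    · simpa [gp] using gp_nonneg (β := β) (hA.eigenvalues_nonneg i)
    · simp
  have := hdiag.mul_mul_conjTranspose_same (hA.1.eigenvectorUnitary : Matrix (Fin d) (Fin d) ℂ)
  rwa [← Matrix.star_eq_conjTranspose] at this

end S4

section S5
variable {d : ℕ}

lemma coe_inv_star (W : Matrix.unitaryGroup (Fin d) ℂ) :
    ((W⁻¹ : Matrix.unitaryGroup (Fin d) ℂ) : Matrix (Fin d) (Fin d) ℂ)
      = star (W : Matrix (Fin d) (Fin d) ℂ) := by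
  rw [← Unitary.star_eq_inv]
  rfl

lemma unitary_matrix_inv (W : Matrix.unitaryGroup (Fin d) ℂ) :
    ((W : Matrix (Fin d) (Fin d) ℂ))⁻¹ = star (W : Matrix (Fin d) (Fin d) ℂ) :=
  Matrix.inv_eq_right_inv (Matrix.mem_unitaryGroup_iff.mp W.2)

lemma trace_conj_unitary (W : Matrix.unitaryGroup (Fin d) ℂ) (A : Matrix (Fin d) (Fin d) ℂ) :
    ((W : Matrix (Fin d) (Fin d) ℂ) * A * star (W : Matrix (Fin d) (Fin d) ℂ)).trace = A.trace := by
  rw [Matrix.trace_mul_cycle,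
    show star (W : Matrix (Fin d) (Fin d) ℂ) * (W : Matrix (Fin d) (Fin d) ℂ) = 1 from
      Matrix.mem_unitaryGroup_iff'.mp W.2, one_mul]

lemma conj_posSemidef {A : Matrix (Fin d) (Fin d) ℂ} (hA : A.PosSemidef)
    (W : Matrix.unitaryGroup (Fin d) ℂ) :
    ((W : Matrix (Fin d) (Fin d) ℂ) * A * star (W : Matrix (Fin d) (Fin d) ℂ)).PosSemidef := by
  have := hA.mul_mul_conjTranspose_same (W : Matrix (Fin d) (Fin d) ℂ)
  rwa [← Matrix.star_eq_conjTranspose] at this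

lemma logb_le_max_one {x K : ℝ} (hx : 0 ≤ x) (hK : x ≤ K) :
    Real.logb 2 x ≤ Real.logb 2 (max 1 K) := by
  rcases le_or_gt x 1 with h | h
  · calc Real.logb 2 x ≤ 0 := Real.logb_nonpos (by norm_num) hx h
      _ ≤ Real.logb 2 (max 1 K) := Real.logb_nonneg (by norm_num) (le_max_left 1 K)
  · exact Real.logb_le_logb_of_le (by norm_num) (by linarith) (hK.trans (le_max_right 1 K))

/-- The group average of unitary conjugates commutes with each `v h`. -/
lemma avg_comm {G : Type*} [Group G] [Fintype G] (v : G →* Matrix.unitaryGroup (Fin d) ℂ)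
    (A : Matrix (Fin d) (Fin d) ℂ) (h : G) :
    ((v h : Matrix (Fin d) (Fin d) ℂ)) *
        (∑ g : G, (v g : Matrix (Fin d) (Fin d) ℂ) * A * star (v g : Matrix (Fin d) (Fin d) ℂ))
      = (∑ g : G, (v g : Matrix (Fin d) (Fin d) ℂ) * A * star (v g : Matrix (Fin d) (Fin d) ℂ)) *
          (v h : Matrix (Fin d) (Fin d) ℂ) := by
  rw [Finset.mul_sum, Finset.sum_mul]
  refine Fintype.sum_equiv (Equiv.mulLeft h) _ _ fun g => ?_
  have hs : star ((v h : Matrix (Fin d) (Fin d) ℂ)) * (v h : Matrix (Fin d) (Fin d) ℂ) = 1 :=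
    Matrix.mem_unitaryGroup_iff'.mp (v h).2
  have hmul : ((v (h * g) : Matrix (Fin d) (Fin d) ℂ))
      = (v h : Matrix (Fin d) (Fin d) ℂ) * (v g : Matrix (Fin d) (Fin d) ℂ) := by
    rw [_root_.map_mul]; rfl
  show (v h : Matrix (Fin d) (Fin d) ℂ) * ((v g : Matrix (Fin d) (Fin d) ℂ) * A *
      star (v g : Matrix (Fin d) (Fin d) ℂ))
    = (v (h * g) : Matrix (Fin d) (Fin d) ℂ) * A * star (v (h * g) : Matrix (Fin d) (Fin d) ℂ) *
        (v h : Matrix (Fin d) (Fin d) ℂ)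
  rw [hmul, StarMul.star_mul]
  simp only [mul_assoc, hs, mul_one]

end S5

section S6
variable {d : ℕ} {α : ℝ}

lemma gp_le_self (hα : 1 ≤ α) {x : ℝ} (h0 : 0 ≤ x) (h1 : x ≤ 1) : gp α x ≤ x := by
  rcases eq_or_lt_of_le h0 with h | h
  · simp [gp, ← h]
  · rw [gp_ne_zero_eq (ne_of_gt h)]
    calc x ^ α ≤ x ^ (1:ℝ) := Real.rpow_le_rpow_of_exponent_ge h h1 hα
      _ = x := Real.rpow_one _

lemma gp_le_one (hα : 1 ≤ α) {x : ℝ} (h0 : 0 ≤ x) (h1 : x ≤ 1) : gp α x ≤ 1 :=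
  (gp_le_self hα h0 h1).trans h1

lemma eigenvalues_le_one {A : Matrix (Fin d) (Fin d) ℂ} (hA : A.PosSemidef)
    (htr : A.trace = 1) (i : Fin d) : hA.1.eigenvalues i ≤ 1 := by
  rw [← sum_eigenvalues_eq_one hA htr]
  exact Finset.single_le_sum (fun j _ => hA.eigenvalues_nonneg j) (Finset.mem_univ i)

/-- Facts about `T = tr((X)^α)` for a density matrix `X`. -/
lemma density_T_facts (hd : 0 < d) (hα : 1 < α) {X : Matrix (Fin d) (Fin d) ℂ}
    (hX : X.PosSemidef) (htr : X.trace = 1) :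
    (mpow X α).trace = ((((mpow X α).trace).re : ℝ) : ℂ) ∧
      (d:ℝ) ^ (1 - α) ≤ ((mpow X α).trace).re ∧ ((mpow X α).trace).re ≤ 1 := by
  have hre := re_trace_mpow hX.1 α
  have heig0 := hX.eigenvalues_nonneg
  have heigsum := sum_eigenvalues_eq_one hX htr
  refine ⟨?_, ?_, ?_⟩
  · rw [trace_mpow hX.1 α]
    norm_cast
  · rw [hre]; exact sum_gp_ge hd hα _ heig0 heigsum
  · rw [hre]; exact sum_gp_le_one hα _ heig0 heigsum

/-- Facts about `tr(S^(1-α))` for a positive definite density matrix `S`. -/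
lemma density_trB_facts (hd : 0 < d) (hα : 1 < α) {S : Matrix (Fin d) (Fin d) ℂ}
    (hS : S.PosDef) (htr : S.trace = 1) :
    (mpow S (1-α)).trace = ((((mpow S (1-α)).trace).re : ℝ) : ℂ) ∧
      (d:ℝ) ^ α ≤ ((mpow S (1-α)).trace).re := by
  have hre := re_trace_mpow hS.1 (1-α)
  have heigpos : ∀ i, 0 < hS.1.eigenvalues i := hS.eigenvalues_pos
  have heigsum : ∑ i, hS.1.eigenvalues i = 1 := sum_eigenvalues_eq_one hS.posSemidef htr
  constructor
  · rw [trace_mpow hS.1 (1-α)]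
    norm_cast
  · rw [hre]; exact sum_gp_one_sub_ge hd hα _ heigpos heigsum

/-- `0 ≤ re tr(X^α B) ≤ re tr B` for a density `X` and PSD `B`. -/
lemma pair_trace_facts (hα : 1 < α) {X B : Matrix (Fin d) (Fin d) ℂ}
    (hX : X.PosSemidef) (htrX : X.trace = 1) (hB : B.PosSemidef) :
    0 ≤ ((mpow X α * B).trace).re ∧ ((mpow X α * B).trace).re ≤ (B.trace).re := by
  have hherm := hX.1
  set U : Matrix (Fin d) (Fin d) ℂ := (hherm.eigenvectorUnitary : Matrix (Fin d) (Fin d) ℂ) with hU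
  have hQ : (star U * B * U).PosSemidef := by
    rw [Matrix.star_eq_conjTranspose]
    exact hB.conjTranspose_mul_mul_same _
  have hq0 : ∀ i, 0 ≤ ((star U * B * U) i i).re := fun i => (psd_diag_nonneg hQ i).1
  have hrw := re_trace_mpow_mul hherm α B
  have htrQ : ∑ i, ((star U * B * U) i i).re = (B.trace).re := by
    have h1 : (star U * B * U).trace = B.trace := by
      rw [Matrix.trace_mul_cycle,
        show U * star U = 1 from Matrix.mem_unitaryGroup_iff.mp hherm.eigenvectorUnitary.2,
        one_mul]
    rw [← h1]
    rw [Matrix.trace, Complex.re_sum]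
    rfl
  constructor
  · rw [hrw]
    exact Finset.sum_nonneg fun i _ =>
      mul_nonneg (gp_nonneg (hX.eigenvalues_nonneg i)) (hq0 i)
  · rw [hrw, ← htrQ]
    refine Finset.sum_le_sum fun i _ => ?_
    exact mul_le_of_le_one_left (hq0 i)
      (gp_le_one hα.le (hX.eigenvalues_nonneg i) (eigenvalues_le_one hX htrX i))

/-- The `D_α` value against a scalar matrix. -/
lemma Dalpha_scalar (hd : 0 < d) (hα : 1 < α) {X : Matrix (Fin d) (Fin d) ℂ}
    (hX : X.PosSemidef) (htrX : X.trace = 1) :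
    Dalpha α X ((d:ℂ)⁻¹ • 1)
      = Real.logb 2 d - (1/(1-α)) * Real.logb 2 ((mpow X α).trace).re := by
  have hdR : (0:ℝ) < (d:ℝ) := by exact_mod_cast hd
  obtain ⟨htrA, hTge, hTle⟩ := density_T_facts hd hα hX htrX
  set T : ℝ := ((mpow X α).trace).re with hT
  have hTpos : 0 < T := lt_of_lt_of_le (Real.rpow_pos_of_pos hdR _) hTge
  have hrc : ((((d:ℝ)⁻¹) : ℝ) : ℂ) = (d:ℂ)⁻¹ := by push_cast; ring
  have h1 : mpow ((d:ℂ)⁻¹ • (1 : Matrix (Fin d) (Fin d) ℂ)) (1-α)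
      = ((((d:ℝ)⁻¹ ^ (1-α) : ℝ)) : ℂ) • 1 := by
    rw [← hrc]
    exact mpow_ofReal_smul_one (inv_ne_zero (ne_of_gt hdR)) (1-α)
  have h2 : mpow X α * (((((d:ℝ)⁻¹ ^ (1-α) : ℝ)) : ℂ) • (1 : Matrix (Fin d) (Fin d) ℂ))
      = ((((d:ℝ)⁻¹ ^ (1-α) : ℝ)) : ℂ) • mpow X α := by
    rw [mul_smul_comm, mul_one]
  have h3 : ((mpow X α * (((((d:ℝ)⁻¹ ^ (1-α) : ℝ)) : ℂ) •
      (1 : Matrix (Fin d) (Fin d) ℂ))).trace).re = (d:ℝ)⁻¹ ^ (1-α) * T := by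
    rw [h2, Matrix.trace_smul, htrA, smul_eq_mul]
    push_cast
    simp
  unfold Dalpha
  rw [h1, h3]
  have hrpos : (0:ℝ) < (d:ℝ)⁻¹ ^ (1-α) := Real.rpow_pos_of_pos (by positivity) _
  rw [Real.logb_mul (ne_of_gt hrpos) (ne_of_gt hTpos)]
  rw [Real.inv_rpow hdR.le, Real.logb_inv,
    Real.logb_rpow_eq_mul_logb_of_pos hdR]
  have hne1 : α - 1 ≠ 0 := by linarith
  have hne2 : (1:ℝ) - α ≠ 0 := by linarith
  field_simp
  ring

end S6


/-- **Evaluation of the relative-entropy bound for covariant channels.**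
For a positive trace-preserving map `Φ` that is covariant with respect to representations
`u, v` of a finite group `G` (with `v` irreducible), every density matrix `σ` with `Φ σ`
positive definite satisfies `⨆_ρ D_α(Φ ρ‖Φ σ) ≥ log₂ d_out − S^min_α(Φ)`, with equality
for `σ = (1/d_in) • 1`. -/
theorem covariant_channel_sup_Dalpha
    (d_in d_out : ℕ) (hd_in : 0 < d_in) (hd_out : 0 < d_out)
    (α : ℝ) (hα : 1 < α)
    (Φ : Matrix (Fin d_in) (Fin d_in) ℂ →ₗ[ℂ] Matrix (Fin d_out) (Fin d_out) ℂ)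
    (hΦ_pos : ∀ ρ : Matrix (Fin d_in) (Fin d_in) ℂ, ρ.PosSemidef → (Φ ρ).PosSemidef)
    (hΦ_tr : ∀ ρ : Matrix (Fin d_in) (Fin d_in) ℂ, (Φ ρ).trace = ρ.trace)
    (G : Type*) [Group G] [Fintype G]
    (u : G →* Matrix.unitaryGroup (Fin d_in) ℂ)
    (v : G →* Matrix.unitaryGroup (Fin d_out) ℂ)
    (hcov : ∀ (g : G) (ρ : Matrix (Fin d_in) (Fin d_in) ℂ),
      Φ ((u g : Matrix (Fin d_in) (Fin d_in) ℂ) * ρ * ((u g)⁻¹ : Matrix (Fin d_in) (Fin d_in) ℂ)) =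
        (v g : Matrix (Fin d_out) (Fin d_out) ℂ) * Φ ρ *
          ((v g)⁻¹ : Matrix (Fin d_out) (Fin d_out) ℂ))
    (hirr : ∀ N : Matrix (Fin d_out) (Fin d_out) ℂ,
      (∀ g : G, (v g : Matrix (Fin d_out) (Fin d_out) ℂ) * N =
          N * (v g : Matrix (Fin d_out) (Fin d_out) ℂ)) →
        ∃ c : ℂ, N = c • (1 : Matrix (Fin d_out) (Fin d_out) ℂ)) :
    (∀ σ : Matrix (Fin d_in) (Fin d_in) ℂ, σ.PosSemidef → σ.trace = 1 → (Φ σ).PosDef →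
      Real.logb 2 d_out -
          (⨅ ρ : {ρ : Matrix (Fin d_in) (Fin d_in) ℂ // ρ.PosSemidef ∧ ρ.trace = 1},
            (1 / (1 - α)) * Real.logb 2 ((mpow (Φ (ρ : Matrix (Fin d_in) (Fin d_in) ℂ)) α).trace).re) ≤
        ⨆ ρ : {ρ : Matrix (Fin d_in) (Fin d_in) ℂ // ρ.PosSemidef ∧ ρ.trace = 1},
          Dalpha α (Φ (ρ : Matrix (Fin d_in) (Fin d_in) ℂ)) (Φ σ)) ∧
    (⨆ ρ : {ρ : Matrix (Fin d_in) (Fin d_in) ℂ // ρ.PosSemidef ∧ ρ.trace = 1},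
        Dalpha α (Φ (ρ : Matrix (Fin d_in) (Fin d_in) ℂ))
          (Φ (((d_in : ℂ))⁻¹ • (1 : Matrix (Fin d_in) (Fin d_in) ℂ)))) =
      Real.logb 2 d_out -
        (⨅ ρ : {ρ : Matrix (Fin d_in) (Fin d_in) ℂ // ρ.PosSemidef ∧ ρ.trace = 1},
          (1 / (1 - α)) * Real.logb 2 ((mpow (Φ (ρ : Matrix (Fin d_in) (Fin d_in) ℂ)) α).trace).re) := by
  classical
  have h1α : (0:ℝ) < α - 1 := by linarith
  have hdoR : (0:ℝ) < (d_out:ℝ) := by exact_mod_cast hd_out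
  have hdiC : (d_in:ℂ) ≠ 0 := Nat.cast_ne_zero.mpr hd_in.ne'
  have hdoC : (d_out:ℂ) ≠ 0 := Nat.cast_ne_zero.mpr hd_out.ne'
  have hGne : Nonempty G := ⟨1⟩
  -- the maximally mixed input state is a density matrix
  have hρ0psd : ((d_in:ℂ)⁻¹ • (1 : Matrix (Fin d_in) (Fin d_in) ℂ)).PosSemidef := by
    rw [Matrix.smul_one_eq_diagonal]
    refine Matrix.posSemidef_diagonal_iff.mpr fun i => ?_
    rw [show (d_in:ℂ)⁻¹ = (((d_in:ℝ)⁻¹ : ℝ) : ℂ) by push_cast; ring, Complex.nonneg_iff]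
    constructor
    · simp only [Complex.ofReal_re]; positivity
    · simp
  have hρ0tr : ((d_in:ℂ)⁻¹ • (1 : Matrix (Fin d_in) (Fin d_in) ℂ)).trace = 1 := by
    rw [Matrix.trace_smul, Matrix.trace_one, smul_eq_mul]
    simp only [Fintype.card_fin]
    exact inv_mul_cancel₀ hdiC
  have hne : Nonempty {ρ : Matrix (Fin d_in) (Fin d_in) ℂ // ρ.PosSemidef ∧ ρ.trace = 1} :=
    ⟨⟨_, hρ0psd, hρ0tr⟩⟩
  -- facts about outputs of densities
  have hXpsd : ∀ ρ : {ρ : Matrix (Fin d_in) (Fin d_in) ℂ // ρ.PosSemidef ∧ ρ.trace = 1},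
      (Φ (ρ : Matrix (Fin d_in) (Fin d_in) ℂ)).PosSemidef := fun ρ => hΦ_pos ρ.1 ρ.2.1
  have hXtr : ∀ ρ : {ρ : Matrix (Fin d_in) (Fin d_in) ℂ // ρ.PosSemidef ∧ ρ.trace = 1},
      (Φ (ρ : Matrix (Fin d_in) (Fin d_in) ℂ)).trace = 1 := fun ρ => (hΦ_tr ρ.1).trans ρ.2.2
  have hTfacts := fun ρ : {ρ : Matrix (Fin d_in) (Fin d_in) ℂ // ρ.PosSemidef ∧ ρ.trace = 1} =>
    density_T_facts hd_out hα (hXpsd ρ) (hXtr ρ)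
  have hTpos : ∀ ρ : {ρ : Matrix (Fin d_in) (Fin d_in) ℂ // ρ.PosSemidef ∧ ρ.trace = 1},
      0 < ((mpow (Φ (ρ : Matrix (Fin d_in) (Fin d_in) ℂ)) α).trace).re := fun ρ =>
    lt_of_lt_of_le (Real.rpow_pos_of_pos hdoR _) (hTfacts ρ).2.1
  have hf0 : ∀ ρ : {ρ : Matrix (Fin d_in) (Fin d_in) ℂ // ρ.PosSemidef ∧ ρ.trace = 1},
      0 ≤ (1 / (1 - α)) * Real.logb 2 ((mpow (Φ (ρ : Matrix (Fin d_in) (Fin d_in) ℂ)) α).trace).re := by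
    intro ρ
    have hlog : Real.logb 2 ((mpow (Φ (ρ : Matrix (Fin d_in) (Fin d_in) ℂ)) α).trace).re ≤ 0 :=
      Real.logb_nonpos (by norm_num) (hTpos ρ).le (hTfacts ρ).2.2
    have hcoef : (1 / (1 - α)) ≤ 0 := by
      apply div_nonpos_of_nonneg_of_nonpos <;> linarith
    have hprod := mul_nonneg (neg_nonneg.2 hcoef) (neg_nonneg.2 hlog)
    rw [neg_mul_neg] at hprod
    exact hprod
  have hbddf : BddBelow (Set.range fun ρ : {ρ : Matrix (Fin d_in) (Fin d_in) ℂ // ρ.PosSemidef ∧ ρ.trace = 1} =>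
      (1 / (1 - α)) * Real.logb 2 ((mpow (Φ (ρ : Matrix (Fin d_in) (Fin d_in) ℂ)) α).trace).re) :=
    ⟨0, by rintro x ⟨ρ, rfl⟩; exact hf0 ρ⟩
  -- the output of the maximally mixed state
  have hΦunit : Φ ((d_in:ℂ)⁻¹ • 1) = (d_out:ℂ)⁻¹ • 1 := by
    have hfix : (u 1 : Matrix (Fin d_in) (Fin d_in) ℂ) = (u 1 : Matrix (Fin d_in) (Fin d_in) ℂ) := rfl
    have hcomm : ∀ g : G, (v g : Matrix (Fin d_out) (Fin d_out) ℂ) * Φ ((d_in:ℂ)⁻¹ • 1)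
        = Φ ((d_in:ℂ)⁻¹ • 1) * (v g : Matrix (Fin d_out) (Fin d_out) ℂ) := by
      intro g
      have h := hcov g ((d_in:ℂ)⁻¹ • 1)
      rw [unitary_matrix_inv, unitary_matrix_inv, mul_smul_comm, mul_one, smul_mul_assoc,
        Matrix.mem_unitaryGroup_iff.mp (u g).2] at h
      -- h : Φ ((d_in)⁻¹ • 1) = v g * Φ (...) * star (v g)
      have h2 := congrArg (fun M => M * (v g : Matrix (Fin d_out) (Fin d_out) ℂ)) h
      simp only [mul_assoc] at h2
      rw [Matrix.mem_unitaryGroup_iff'.mp (v g).2, mul_one] at h2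
      exact h2.symm
    obtain ⟨c, hc⟩ := hirr _ hcomm
    have htr1 : (Φ ((d_in:ℂ)⁻¹ • 1)).trace = 1 := (hΦ_tr _).trans hρ0tr
    rw [hc, Matrix.trace_smul, Matrix.trace_one, smul_eq_mul] at htr1
    simp only [Fintype.card_fin] at htr1
    have hcval : c = (d_out:ℂ)⁻¹ := by
      field_simp [hdoC]
      linear_combination htr1
    rw [hc, hcval]
  constructor
  · -- PART 1: the inequality for arbitrary σ
    intro σ hσpsd hσtr hΦσpd
    have hΦσtr : (Φ σ).trace = 1 := (hΦ_tr σ).trans hσtr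
    obtain ⟨htrB, htrBge⟩ := density_trB_facts hd_out hα hΦσpd hΦσtr
    have htrBpos : 0 < ((mpow (Φ σ) (1-α)).trace).re :=
      lt_of_lt_of_le (Real.rpow_pos_of_pos hdoR α) htrBge
    have hBpsd : (mpow (Φ σ) (1-α)).PosSemidef := mpow_posSemidef hΦσpd.posSemidef (1-α)
    -- boundedness of the Dα family
    have hDle : ∀ ρ : {ρ : Matrix (Fin d_in) (Fin d_in) ℂ // ρ.PosSemidef ∧ ρ.trace = 1},
        Dalpha α (Φ (ρ : Matrix (Fin d_in) (Fin d_in) ℂ)) (Φ σ)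
          ≤ (1/(α-1)) * Real.logb 2 (max 1 ((mpow (Φ σ) (1-α)).trace).re) := by
      intro ρ
      obtain ⟨hx0, hxle⟩ := pair_trace_facts hα (hXpsd ρ) (hXtr ρ) hBpsd
      unfold Dalpha
      exact mul_le_mul_of_nonneg_left (logb_le_max_one hx0 hxle) (by positivity)
    have hbddD : BddAbove (Set.range fun ρ : {ρ : Matrix (Fin d_in) (Fin d_in) ℂ // ρ.PosSemidef ∧ ρ.trace = 1} =>
        Dalpha α (Φ (ρ : Matrix (Fin d_in) (Fin d_in) ℂ)) (Φ σ)) :=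
      ⟨_, by rintro x ⟨ρ, rfl⟩; exact hDle ρ⟩
    -- key pointwise estimate via group averaging
    have hkey : ∀ ρ : {ρ : Matrix (Fin d_in) (Fin d_in) ℂ // ρ.PosSemidef ∧ ρ.trace = 1},
        Real.logb 2 d_out -
            (1 / (1 - α)) * Real.logb 2 ((mpow (Φ (ρ : Matrix (Fin d_in) (Fin d_in) ℂ)) α).trace).re
          ≤ ⨆ ρ' : {ρ : Matrix (Fin d_in) (Fin d_in) ℂ // ρ.PosSemidef ∧ ρ.trace = 1},
              Dalpha α (Φ (ρ' : Matrix (Fin d_in) (Fin d_in) ℂ)) (Φ σ) := by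
      intro ρ
      obtain ⟨htrA, hTge, hTle⟩ := hTfacts ρ
      have hTpos' := hTpos ρ
      have hXherm : (Φ (ρ : Matrix (Fin d_in) (Fin d_in) ℂ)).IsHermitian := (hXpsd ρ).1
      have hcov' : ∀ g : G, Φ ((u g : Matrix (Fin d_in) (Fin d_in) ℂ) * (ρ : Matrix (Fin d_in) (Fin d_in) ℂ) * star (u g : Matrix (Fin d_in) (Fin d_in) ℂ))
          = (v g : Matrix (Fin d_out) (Fin d_out) ℂ) * Φ (ρ : Matrix (Fin d_in) (Fin d_in) ℂ) * star (v g : Matrix (Fin d_out) (Fin d_out) ℂ) := by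
        intro g
        have h := hcov g (ρ : Matrix (Fin d_in) (Fin d_in) ℂ)
        rwa [unitary_matrix_inv, unitary_matrix_inv] at h
      obtain ⟨c, hc⟩ := hirr
        (∑ g : G, (v g : Matrix (Fin d_out) (Fin d_out) ℂ) * mpow (Φ (ρ : Matrix (Fin d_in) (Fin d_in) ℂ)) α * star (v g : Matrix (Fin d_out) (Fin d_out) ℂ))
        (fun h => avg_comm v (mpow (Φ (ρ : Matrix (Fin d_in) (Fin d_in) ℂ)) α) h)
      have htrM : (∑ g : G, (v g : Matrix (Fin d_out) (Fin d_out) ℂ) * mpow (Φ (ρ : Matrix (Fin d_in) (Fin d_in) ℂ)) α * star (v g : Matrix (Fin d_out) (Fin d_out) ℂ)).trace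
          = (Fintype.card G : ℂ) * ((((mpow (Φ (ρ : Matrix (Fin d_in) (Fin d_in) ℂ)) α).trace).re : ℂ) : ℂ) := by
        rw [Matrix.trace_sum,
          Finset.sum_congr rfl (fun g _ => trace_conj_unitary (v g) _), Finset.sum_const,
          Finset.card_univ, nsmul_eq_mul, htrA]
        simp
      have hcd : c * (d_out:ℂ) = (Fintype.card G : ℂ) * ((((mpow (Φ (ρ : Matrix (Fin d_in) (Fin d_in) ℂ)) α).trace).re : ℂ)) := by
        rw [← htrM, hc, Matrix.trace_smul, Matrix.trace_one, smul_eq_mul]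
        simp only [Fintype.card_fin]
      have hsum : (∑ g : G, (((v g : Matrix (Fin d_out) (Fin d_out) ℂ) * mpow (Φ (ρ : Matrix (Fin d_in) (Fin d_in) ℂ)) α * star (v g : Matrix (Fin d_out) (Fin d_out) ℂ)) * mpow (Φ σ) (1-α)).trace)
          = c * ((((mpow (Φ σ) (1-α)).trace).re : ℂ)) := by
        rw [← Matrix.trace_sum, ← Finset.sum_mul, hc, smul_mul_assoc, one_mul,
          Matrix.trace_smul, smul_eq_mul, htrB]
        simp
      have hcval : c = (Fintype.card G : ℂ) * ((((mpow (Φ (ρ : Matrix (Fin d_in) (Fin d_in) ℂ)) α).trace).re : ℂ)) / (d_out:ℂ) := by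
        field_simp [hdoC]
        linear_combination hcd
      have hsumre : (∑ g : G, ((((v g : Matrix (Fin d_out) (Fin d_out) ℂ) * mpow (Φ (ρ : Matrix (Fin d_in) (Fin d_in) ℂ)) α * star (v g : Matrix (Fin d_out) (Fin d_out) ℂ)) * mpow (Φ σ) (1-α)).trace).re)
          = (Fintype.card G : ℝ) * (((mpow (Φ (ρ : Matrix (Fin d_in) (Fin d_in) ℂ)) α).trace).re * ((mpow (Φ σ) (1-α)).trace).re / (d_out:ℝ)) := by
        rw [← Complex.re_sum, hsum, hcval]
        rw [show (Fintype.card G : ℂ) * ((((mpow (Φ (ρ : Matrix (Fin d_in) (Fin d_in) ℂ)) α).trace).re : ℂ)) / (d_out:ℂ) * ((((mpow (Φ σ) (1-α)).trace).re : ℂ))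
            = (((Fintype.card G : ℝ) * (((mpow (Φ (ρ : Matrix (Fin d_in) (Fin d_in) ℂ)) α).trace).re * ((mpow (Φ σ) (1-α)).trace).re / (d_out:ℝ)) : ℝ) : ℂ) by push_cast; ring]
        rw [Complex.ofReal_re]
      obtain ⟨g₀, -, hg₀⟩ := Finset.exists_le_of_sum_le (Finset.univ_nonempty (α := G))
        (show (∑ _g : G, (((mpow (Φ (ρ : Matrix (Fin d_in) (Fin d_in) ℂ)) α).trace).re * ((mpow (Φ σ) (1-α)).trace).re / (d_out:ℝ)))
            ≤ ∑ g : G, ((((v g : Matrix (Fin d_out) (Fin d_out) ℂ) * mpow (Φ (ρ : Matrix (Fin d_in) (Fin d_in) ℂ)) α * star (v g : Matrix (Fin d_out) (Fin d_out) ℂ)) * mpow (Φ σ) (1-α)).trace).re from by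
          rw [hsumre, Finset.sum_const, Finset.card_univ, nsmul_eq_mul])
      refine le_trans ?_ (le_ciSup hbddD
        ⟨(u g₀ : Matrix (Fin d_in) (Fin d_in) ℂ) * (ρ : Matrix (Fin d_in) (Fin d_in) ℂ) * star (u g₀ : Matrix (Fin d_in) (Fin d_in) ℂ),
          conj_posSemidef ρ.2.1 (u g₀), (trace_conj_unitary (u g₀) _).trans ρ.2.2⟩)
      have hDval : Dalpha α (Φ ((u g₀ : Matrix (Fin d_in) (Fin d_in) ℂ) * (ρ : Matrix (Fin d_in) (Fin d_in) ℂ) * star (u g₀ : Matrix (Fin d_in) (Fin d_in) ℂ))) (Φ σ)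
          = (1/(α-1)) * Real.logb 2 ((((v g₀ : Matrix (Fin d_out) (Fin d_out) ℂ) * mpow (Φ (ρ : Matrix (Fin d_in) (Fin d_in) ℂ)) α * star (v g₀ : Matrix (Fin d_out) (Fin d_out) ℂ)) * mpow (Φ σ) (1-α)).trace).re := by
        unfold Dalpha
        rw [hcov' g₀, mpow_conj hXherm (v g₀) α]
      rw [hDval]
      -- final numeric estimate
      have hdpow : (d_out:ℝ) ^ (α-1) = (d_out:ℝ) ^ α / (d_out:ℝ) := by
        rw [show α - 1 = α - (1:ℝ) from rfl, Real.rpow_sub hdoR, Real.rpow_one]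
      have hlower : (((mpow (Φ (ρ : Matrix (Fin d_in) (Fin d_in) ℂ)) α).trace).re) * (d_out:ℝ) ^ (α-1)
          ≤ ((((v g₀ : Matrix (Fin d_out) (Fin d_out) ℂ) * mpow (Φ (ρ : Matrix (Fin d_in) (Fin d_in) ℂ)) α * star (v g₀ : Matrix (Fin d_out) (Fin d_out) ℂ)) * mpow (Φ σ) (1-α)).trace).re := by
        refine le_trans ?_ hg₀
        rw [hdpow]
        calc (((mpow (Φ (ρ : Matrix (Fin d_in) (Fin d_in) ℂ)) α).trace).re) * ((d_out:ℝ) ^ α / (d_out:ℝ))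
            = (((mpow (Φ (ρ : Matrix (Fin d_in) (Fin d_in) ℂ)) α).trace).re) * (d_out:ℝ) ^ α / (d_out:ℝ) := by
              ring
          _ ≤ (((mpow (Φ (ρ : Matrix (Fin d_in) (Fin d_in) ℂ)) α).trace).re) * ((mpow (Φ σ) (1-α)).trace).re / (d_out:ℝ) := by
              gcongr
      have hposlower : 0 < (((mpow (Φ (ρ : Matrix (Fin d_in) (Fin d_in) ℂ)) α).trace).re) * (d_out:ℝ) ^ (α-1) := by positivity
      have hlogeq : Real.logb 2 d_out -
            (1 / (1 - α)) * Real.logb 2 ((mpow (Φ (ρ : Matrix (Fin d_in) (Fin d_in) ℂ)) α).trace).re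
          = (1/(α-1)) * Real.logb 2 ((((mpow (Φ (ρ : Matrix (Fin d_in) (Fin d_in) ℂ)) α).trace).re) * (d_out:ℝ) ^ (α-1)) := by
        rw [Real.logb_mul (ne_of_gt hTpos') (by positivity),
          Real.logb_rpow_eq_mul_logb_of_pos hdoR]
        have hne2 : (1:ℝ) - α ≠ 0 := by linarith
        have hne1 : α - 1 ≠ 0 := by linarith
        field_simp
        ring
      rw [hlogeq]
      exact mul_le_mul_of_nonneg_left
        (Real.logb_le_logb_of_le one_lt_two hposlower hlower) (by positivity)
    have h2 : ∀ ρ : {ρ : Matrix (Fin d_in) (Fin d_in) ℂ // ρ.PosSemidef ∧ ρ.trace = 1},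
        Real.logb 2 d_out - (⨆ ρ' : {ρ : Matrix (Fin d_in) (Fin d_in) ℂ // ρ.PosSemidef ∧ ρ.trace = 1},
            Dalpha α (Φ (ρ' : Matrix (Fin d_in) (Fin d_in) ℂ)) (Φ σ))
          ≤ (1 / (1 - α)) * Real.logb 2 ((mpow (Φ (ρ : Matrix (Fin d_in) (Fin d_in) ℂ)) α).trace).re :=
      fun ρ => by linarith [hkey ρ]
    have h3 := le_ciInf h2
    linarith [h3]
  · -- PART 2: equality at the maximally mixed state
    have hpt : ∀ ρ : {ρ : Matrix (Fin d_in) (Fin d_in) ℂ // ρ.PosSemidef ∧ ρ.trace = 1},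
        Dalpha α (Φ (ρ : Matrix (Fin d_in) (Fin d_in) ℂ)) (Φ ((d_in:ℂ)⁻¹ • 1))
          = Real.logb 2 d_out -
              (1 / (1 - α)) * Real.logb 2 ((mpow (Φ (ρ : Matrix (Fin d_in) (Fin d_in) ℂ)) α).trace).re := by
      intro ρ
      rw [hΦunit]
      exact Dalpha_scalar hd_out hα (hXpsd ρ) (hXtr ρ)
    rw [iSup_congr hpt]
    have hbddCf : BddAbove (Set.range fun ρ : {ρ : Matrix (Fin d_in) (Fin d_in) ℂ // ρ.PosSemidef ∧ ρ.trace = 1} =>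
        Real.logb 2 d_out -
          (1 / (1 - α)) * Real.logb 2 ((mpow (Φ (ρ : Matrix (Fin d_in) (Fin d_in) ℂ)) α).trace).re) :=
      ⟨Real.logb 2 d_out, by rintro x ⟨ρ, rfl⟩; have := hf0 ρ; simp only []; linarith⟩
    apply le_antisymm
    · exact ciSup_le fun ρ => sub_le_sub_left (ciInf_le hbddf ρ) _
    · have h1 : ∀ ρ : {ρ : Matrix (Fin d_in) (Fin d_in) ℂ // ρ.PosSemidef ∧ ρ.trace = 1},
          Real.logb 2 d_out - (⨆ ρ' : {ρ : Matrix (Fin d_in) (Fin d_in) ℂ // ρ.PosSemidef ∧ ρ.trace = 1},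
              (Real.logb 2 d_out -
                (1 / (1 - α)) * Real.logb 2 ((mpow (Φ (ρ' : Matrix (Fin d_in) (Fin d_in) ℂ)) α).trace).re))
            ≤ (1 / (1 - α)) * Real.logb 2 ((mpow (Φ (ρ : Matrix (Fin d_in) (Fin d_in) ℂ)) α).trace).re :=
        fun ρ => by have := le_ciSup hbddCf ρ; linarith
      have h2 := le_ciInf h1
      linarith
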